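/- Let R = C⁰_{b,D,<∞}(D) for D = [a,b] with a < b. For each x ∈ D, the set m_x = {f ∈ R : f(x) = 0} is a maximal ideal of R, and the set T = {m_x : x ∈ D}, with the subspace topology inherited from the Zariski topology on Specm(R), is a discrete topological space. -/

import Mathlib

open Set Filter Topology

/-- The ℝ-subalgebra of the product ring `W → ℝ` consisting of all bounded
functions with finitely many discontinuity points. -/
def pcAlg (W : Type*) [TopologicalSpace W] : Subalgebra ℝ (W → ℝ) where
  carrier := {f | (∃ C, ∀ x, |f x| ≤ C) ∧ {x | ¬ ContinuousAt f x}.Finite}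
  add_mem' := by
    rintro f g ⟨⟨Cf, hCf⟩, hf⟩ ⟨⟨Cg, hCg⟩, hg⟩
    refine ⟨⟨Cf + Cg, fun x => ?_⟩, (hf.union hg).subset fun x hx => ?_⟩
    · exact (abs_add_le _ _).trans (add_le_add (hCf x) (hCg x))
    · simp only [mem_union, mem_setOf_eq] at hx ⊢
      by_contra h
      push_neg at h
      exact hx (h.1.add h.2)
  mul_mem' := by
    rintro f g ⟨⟨Cf, hCf⟩, hf⟩ ⟨⟨Cg, hCg⟩, hg⟩
    refine ⟨⟨max Cf 0 * max Cg 0, fun x => ?_⟩, (hf.union hg).subset fun x hx => ?_⟩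
    · rw [Pi.mul_apply, abs_mul]
      exact mul_le_mul ((hCf x).trans (le_max_left _ _)) ((hCg x).trans (le_max_left _ _))
        (abs_nonneg _) (le_max_right _ _)
    · simp only [mem_union, mem_setOf_eq] at hx ⊢
      by_contra h
      push_neg at h
      exact hx (h.1.mul h.2)
  algebraMap_mem' := fun r => by
    refine ⟨⟨|r|, fun x => le_of_eq rfl⟩, Set.finite_empty.subset fun x hx => ?_⟩
    exact absurd continuousAt_const hx

/-- The ideal `m_x = {f : f x = 0}` of `R = C⁰_{b,D,<∞}(D)`. -/
def evalZeroIdeal (a b : ℝ) (x : ↥(Set.Icc a b)) : Ideal ↥(pcAlg ↥(Set.Icc a b)) where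
  carrier := {f | f.1 x = 0}
  zero_mem' := rfl
  add_mem' := by
    intro f g hf hg
    show f.1 x + g.1 x = 0
    rw [hf, hg, add_zero]
  smul_mem' := by
    intro c f hf
    show c.1 x * f.1 x = 0
    rw [hf, mul_zero]

open Classical in
/-- The indicator of `{x}` as an element of `pcAlg`. -/
noncomputable def indic {W : Type*} [TopologicalSpace W] [T1Space W] (x : W) : ↥(pcAlg W) :=
  ⟨fun y => if y = x then 1 else 0, by
    constructor
    · exact ⟨1, fun y => by dsimp only; split <;> simp⟩
    · refine (Set.finite_singleton x).subset fun y hy => ?_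
      simp only [Set.mem_setOf_eq] at hy
      by_contra h
      apply hy
      have hne : y ≠ x := by rintro rfl; exact h rfl
      have heq : (fun _ => (0:ℝ)) =ᶠ[𝓝 y] (fun y => if y = x then (1:ℝ) else 0) := by
        filter_upwards [compl_singleton_mem_nhds hne] with z hz
        simp only [Set.mem_compl_iff, Set.mem_singleton_iff] at hz
        simp [hz]
      exact (continuousAt_const (y := (0:ℝ))).congr heq⟩

open Classical in
lemma indic_apply {W : Type*} [TopologicalSpace W] [T1Space W] (x y : W) :
    (indic x).1 y = if y = x then 1 else 0 := rfl

/-- Evaluation at `x` as a ring hom. -/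
noncomputable def evalHom {W : Type*} [TopologicalSpace W] (x : W) : ↥(pcAlg W) →+* ℝ :=
  (Pi.evalRingHom (fun _ : W => ℝ) x).comp (pcAlg W).val.toRingHom

lemma evalZeroIdeal_eq_ker (a b : ℝ) (x : ↥(Set.Icc a b)) :
    evalZeroIdeal a b x = RingHom.ker (evalHom x) := by
  ext f; rfl

lemma evalHom_surjective {W : Type*} [TopologicalSpace W] (x : W) :
    Function.Surjective (evalHom x) := fun r =>
  ⟨algebraMap ℝ _ r, by simp [evalHom]⟩

lemma indic_mem_iff (a b : ℝ) (x y : ↥(Set.Icc a b)) :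
    indic x ∈ evalZeroIdeal a b y ↔ y ≠ x := by
  constructor
  · intro h hxy
    rw [hxy] at h
    have : (indic x).1 x = 0 := h
    rw [indic_apply, if_pos rfl] at this
    exact one_ne_zero this
  · intro hne
    show (indic x).1 y = 0
    rw [indic_apply, if_neg hne]

theorem evalZeroIdeal_isMaximal_and_discrete (a b : ℝ) (hab : a < b) :
    (∀ x : ↥(Set.Icc a b), (evalZeroIdeal a b x).IsMaximal) ∧
      DiscreteTopology
        {I : MaximalSpectrum ↥(pcAlg ↥(Set.Icc a b)) |
          ∃ x : ↥(Set.Icc a b), I.asIdeal = evalZeroIdeal a b x} := by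
  have hmax : ∀ x : ↥(Set.Icc a b), (evalZeroIdeal a b x).IsMaximal := fun x => by
    rw [evalZeroIdeal_eq_ker]
    exact RingHom.ker_isMaximal_of_surjective _ (evalHom_surjective x)
  refine ⟨hmax, ?_⟩
  rw [discreteTopology_iff_isOpen_singleton]
  rintro ⟨I, x, hx⟩
  have hU : IsOpen (MaximalSpectrum.toPrimeSpectrum ⁻¹'
      (PrimeSpectrum.basicOpen (indic x)).1) :=
    MaximalSpectrum.toPrimeSpectrum_continuous.isOpen_preimage _
      (PrimeSpectrum.basicOpen (indic x)).2
  have key : ({⟨I, x, hx⟩} : Set {I : MaximalSpectrum ↥(pcAlg ↥(Set.Icc a b)) |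
      ∃ x : ↥(Set.Icc a b), I.asIdeal = evalZeroIdeal a b x}) =
      Subtype.val ⁻¹' (MaximalSpectrum.toPrimeSpectrum ⁻¹'
        (PrimeSpectrum.basicOpen (indic x)).1) := by
    ext ⟨J, y, hy⟩
    simp only [Set.mem_singleton_iff, Set.mem_preimage, Subtype.mk.injEq,
      PrimeSpectrum.basicOpen]
    change _ ↔ indic x ∉ J.asIdeal
    constructor
    · intro h
      subst h
      rw [hx, indic_mem_iff]
      simp
    · intro h
      have : y = x := by
        by_contra hne
        exact h (hy ▸ (indic_mem_iff a b x y).mpr hne)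
      subst this
      have hJI : J = I := by
        cases J; cases I
        congr 1
        exact hy.trans hx.symm
      exact hJI
  rw [key]
  exact hU.preimage continuous_subtype_val
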